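/- For any α ∈ ℂ and β1, β2 ∈ ℂ, the Minkowski product of the segment K(0,α) and the segment K(β1,β2) equals the convex hull K(0, αβ1, αβ2). -/

import Mathlib

open Set

theorem stmt_3 (α β1 β2 : ℂ) :
    Set.image2 (· * ·) (segment ℝ 0 α) (segment ℝ β1 β2) =
      convexHull ℝ ({0, α * β1, α * β2} : Set ℂ) := by
  have hseg : (fun w : ℂ => α * w) '' segment ℝ β1 β2 = segment ℝ (α * β1) (α * β2) := by
    have := image_segment ℝ (LinearMap.mulLeft ℝ α).toAffineMap β1 β2
    simp at this; exact this
  rw [convexHull_insert (by simp : ({α * β1, α * β2} : Set ℂ).Nonempty), convexHull_pair]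
  ext z
  simp only [mem_image2, mem_convexJoin, mem_singleton_iff, exists_eq_left]
  constructor
  · rintro ⟨x, hx, y, hy, rfl⟩
    refine ⟨α * y, by rw [← hseg]; exact ⟨y, hy, rfl⟩, ?_⟩
    obtain ⟨a, b, ha, hb, hab, rfl⟩ := hx
    exact ⟨a, b, ha, hb, hab, by simp [Complex.real_smul]; ring⟩
  · rintro ⟨w', hw', hz⟩
    rw [← hseg] at hw'
    obtain ⟨w, hw, rfl⟩ := hw'
    obtain ⟨a, b, ha, hb, hab, rfl⟩ := hz
    refine ⟨b • α, ⟨a, b, ha, hb, hab, by simp⟩, w, hw, ?_⟩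
    simp [Complex.real_smul]; ring
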